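/- Suppose f guesses Col(ω,ω₁)-filters. Then the collection NS_f = {N ⊆ ω₁ : N is not f-stationary} is a normal uniform ideal on ω₁: it contains all bounded subsets of ω₁, is closed under subsets, and is closed under diagonal unions. -/

import Mathlib

open Set

noncomputable section

/-- The first uncountable ordinal `ω₁`. -/
def omega1 : Ordinal := (Cardinal.aleph 1).ord

/-- `C` is a club (closed unbounded) subset of `ω₁`. -/
def IsClubOmega1 (C : Set Ordinal) : Prop :=
  C ⊆ Set.Iio omega1 ∧
  (∀ o < omega1, ∃ c ∈ C, o < c) ∧
  (∀ s : Set Ordinal, s ⊆ C → s.Nonempty → sSup s < omega1 → sSup s ∈ C)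

/-- `S` is a stationary subset of `ω₁`. -/
def IsStationaryOmega1 (S : Set Ordinal) : Prop :=
  S ⊆ Set.Iio omega1 ∧ ∀ C : Set Ordinal, IsClubOmega1 C → (S ∩ C).Nonempty

/-- Finite partial functions `ω ⇀ ω₁`, coded as functional finsets of pairs with
values below `ω₁`. -/
def IsCond (p : Finset (ℕ × Ordinal)) : Prop :=
  (∀ x ∈ p, x.2 < omega1) ∧ ∀ x ∈ p, ∀ y ∈ p, x.1 = y.1 → x.2 = y.2

/-- The forcing `Col(ω,ω₁)`. -/
def Col : Type _ := {p : Finset (ℕ × Ordinal) // IsCond p}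

/-- `p ≤ q` iff `p` extends `q`. -/
instance : LE Col := ⟨fun p q => q.1 ⊆ p.1⟩

/-- Two conditions are compatible iff they have a common extension. -/
def Col.Compatible (p q : Col) : Prop := ∃ r : Col, r ≤ p ∧ r ≤ q

/-- `Col(ω,ω₁) ∩ α`: conditions with range contained in `α`. -/
def colBelow (α : Ordinal) : Set Col := {p | ∀ x ∈ p.1, x.2 < α}

/-- `F` is a filter on the suborder `B` of `Col(ω,ω₁)` (the empty set counts as a
filter): upward closed within `B` and directed. -/
def IsColFilter (B F : Set Col) : Prop :=
  F ⊆ B ∧ (∀ p ∈ F, ∀ q ∈ B, p ≤ q → q ∈ F) ∧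
  ∀ p ∈ F, ∀ q ∈ F, ∃ r ∈ F, r ≤ p ∧ r ≤ q

/-- `f` guesses `Col(ω,ω₁)`-filters. -/
def Guesses (f : Ordinal → Set Col) : Prop :=
  ∀ α < omega1, IsColFilter (colBelow α) (f α)

/-- `S^f_b = {α < ω₁ : b ∈ f(α)}`. -/
def Sfb (f : Ordinal → Set Col) (b : Col) : Set Ordinal :=
  {α | α < omega1 ∧ b ∈ f α}

/-- `D` is dense in `Col(ω,ω₁)`. -/
def ColDense (D : Set Col) : Prop := ∀ p : Col, ∃ q ∈ D, q ≤ p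

/-- `S ⊆ ω₁` is `f`-stationary. -/
def fStationary (f : Ordinal → Set Col) (S : Set Ordinal) : Prop :=
  S ⊆ Set.Iio omega1 ∧
  ∀ D : Ordinal → Set Col, (∀ β < omega1, ColDense (D β)) →
    IsStationaryOmega1 {α | α ∈ S ∧ ∀ β < α, (f α ∩ D β).Nonempty}

/-- `f` witnesses `◇(ω₁^{<ω})`. -/
def WitnessesDiamond (f : Ordinal → Set Col) : Prop :=
  Guesses f ∧ ∀ b : Col, fStationary f (Sfb f b)

/-- The ideal of non-`f`-stationary sets. -/
def NSf (f : Ordinal → Set Col) : Set (Set Ordinal) :=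
  {N | N ⊆ Set.Iio omega1 ∧ ¬ fStationary f N}

/-! ### Auxiliary lemmas -/

set_option maxHeartbeats 1000000

universe u

lemma ord_lt_add_one (a : Ordinal) : a < a + 1 := by
  rw [Ordinal.add_one_eq_succ]; exact Order.lt_succ a

lemma omega1_isLimit : Order.IsSuccLimit omega1 :=
  Cardinal.isSuccLimit_ord (Cardinal.aleph0_le_aleph 1)

lemma omega1_bddAbove {s : Set Ordinal} (h : s ⊆ Set.Iio omega1) : BddAbove s :=
  ⟨omega1, fun _ hx => (h hx).le⟩

lemma cof_omega1 : omega1.cof = Cardinal.aleph 1 :=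
  Cardinal.isRegular_aleph_one.cof_eq

lemma iSup_nat_lt_omega1 (g : ℕ → Ordinal.{u}) (h : ∀ n, g n < omega1) :
    (⨆ n, g n) < omega1.{u} := by
  apply Ordinal.iSup_lt_ord_lift.{0, u} _ h
  rw [cof_omega1]
  simpa using Cardinal.aleph0_lt_aleph_one

lemma bsup_lt_omega1 {ξ : Ordinal.{u}} (hξ : ξ < omega1) (g : ∀ α < ξ, Ordinal.{u})
    (h : ∀ α hα, g α hα < omega1) : Ordinal.bsup.{u,u} ξ g < omega1 :=
  Ordinal.bsup_lt_ord (by rw [cof_omega1]; exact Cardinal.lt_ord.mp hξ) h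

lemma omega1_pairing :
    Nonempty ((↥(Set.Iio omega1.{u}) × ↥(Set.Iio omega1.{u})) ≃ ↥(Set.Iio omega1.{u})) := by
  apply Cardinal.eq.mp
  have haleph0 : Cardinal.aleph0 ≤ Cardinal.mk (Set.Iio omega1.{u}) := by
    rw [Ordinal.mk_Iio_ordinal, Cardinal.aleph0_le_lift,
      show omega1.{u}.card = Cardinal.aleph 1 from Cardinal.card_ord _]
    exact Cardinal.aleph0_le_aleph 1
  rw [Cardinal.mk_prod]
  simp only [Cardinal.lift_id]
  exact Cardinal.mul_eq_self haleph0

lemma colDense_univ : ColDense (Set.univ : Set Col) :=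
  fun p => ⟨p, Set.mem_univ p, fun _ h => h⟩

/-- Extract witnesses from a non-`f`-stationary set. -/
lemma not_fStationary_elim {f : Ordinal → Set Col} {N : Set Ordinal}
    (hN : N ⊆ Set.Iio omega1) (h : ¬ fStationary f N) :
    ∃ (D : Ordinal → Set Col) (C : Set Ordinal),
      (∀ β < omega1, ColDense (D β)) ∧ IsClubOmega1 C ∧
      ({α | α ∈ N ∧ ∀ β < α, (f α ∩ D β).Nonempty} ∩ C) = ∅ := by
  rw [fStationary, not_and] at h
  have h2 := h hN
  push_neg at h2
  obtain ⟨D, hD, hns⟩ := h2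
  rw [IsStationaryOmega1, not_and] at hns
  have h3 := hns (fun α hα => hN hα.1)
  push_neg at h3
  obtain ⟨C, hC, hne⟩ := h3
  exact ⟨D, C, hD, hC, hne⟩

/-- Final segments of `ω₁` are clubs. -/
lemma isClub_interval {β : Ordinal} (hβ : β < omega1) :
    IsClubOmega1 {ξ | β ≤ ξ ∧ ξ < omega1} := by
  refine ⟨fun ξ hξ => hξ.2, ?_, ?_⟩
  · intro o ho
    refine ⟨max β o + 1, ⟨?_, ?_⟩, ?_⟩
    · exact le_trans (le_max_left β o) (le_of_lt (ord_lt_add_one _))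
    · rw [Ordinal.add_one_eq_succ]
      exact omega1_isLimit.succ_lt (max_lt hβ ho)
    · exact lt_of_le_of_lt (le_max_right β o) (ord_lt_add_one _)
  · intro s hs hne hlt
    obtain ⟨x, hx⟩ := hne
    refine ⟨le_trans (hs hx).1 (le_csSup ?_ hx), hlt⟩
    exact omega1_bddAbove (fun y hy => (hs hy).2)

/-- The "diagonal intersection together with closure under a pairing function"
club. -/
lemma isClub_diag (C : Ordinal.{u} → Set Ordinal.{u}) (hC : ∀ α < omega1, IsClubOmega1 (C α))
    (pr : Ordinal.{u} → Ordinal.{u} → Ordinal.{u})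
    (hpr : ∀ α < omega1, ∀ β < omega1, pr α β < omega1) :
    IsClubOmega1 {ξ | ξ < omega1 ∧ (∀ α < ξ, ξ ∈ C α) ∧ ∀ α < ξ, ∀ β < ξ, pr α β < ξ} := by
  refine ⟨fun ξ hξ => hξ.1, ?_, ?_⟩
  · -- unboundedness
    intro o ho
    -- a choice function picking elements of the clubs
    have hex : ∀ α ξ : Ordinal, ∃ c, α < omega1 → ξ < omega1 → c ∈ C α ∧ ξ < c := by
      intro α ξ
      by_cases h : α < omega1 ∧ ξ < omega1
      · obtain ⟨c, hc1, hc2⟩ := (hC α h.1).2.1 ξ h.2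
        exact ⟨c, fun _ _ => ⟨hc1, hc2⟩⟩
      · exact ⟨0, fun h1 h2 => absurd ⟨h1, h2⟩ h⟩
    choose F hF using hex
    set step : Ordinal → Ordinal := fun ξ =>
      max ξ (Ordinal.bsup.{u,u} ξ (fun α _ =>
        max (F α ξ) (Ordinal.bsup.{u,u} ξ (fun β _ => pr α β)))) + 1 with hstep_def
    have hstep_lt : ∀ ξ < omega1, step ξ < omega1 := by
      intro ξ hξ
      have h1 : Ordinal.bsup.{u,u} ξ (fun α _ =>
          max (F α ξ) (Ordinal.bsup.{u,u} ξ (fun β _ => pr α β))) < omega1 := by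
        refine bsup_lt_omega1 hξ _ (fun α hα => ?_)
        refine max_lt ?_ (bsup_lt_omega1 hξ _ (fun β hβ =>
          hpr α (hα.trans hξ) β (hβ.trans hξ)))
        exact (hC α (hα.trans hξ)).1 (hF α ξ (hα.trans hξ) hξ).1
      simp only [hstep_def]
      rw [Ordinal.add_one_eq_succ]
      exact omega1_isLimit.succ_lt (max_lt hξ h1)
    have hstep_gt : ∀ ξ, ξ < step ξ :=
      fun ξ => lt_of_le_of_lt (le_max_left _ _) (ord_lt_add_one _)
    have hstep_F : ∀ ξ, ∀ α < ξ, F α ξ < step ξ := by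
      intro ξ α hα
      calc F α ξ ≤ max (F α ξ) (Ordinal.bsup.{u,u} ξ (fun β _ => pr α β)) := le_max_left _ _
        _ ≤ Ordinal.bsup.{u,u} ξ (fun α _ =>
              max (F α ξ) (Ordinal.bsup.{u,u} ξ (fun β _ => pr α β))) := Ordinal.le_bsup _ α hα
        _ ≤ max ξ _ := le_max_right _ _
        _ < step ξ := ord_lt_add_one _
    have hstep_pr : ∀ ξ, ∀ α < ξ, ∀ β < ξ, pr α β < step ξ := by
      intro ξ α hα β hβ
      calc pr α β ≤ Ordinal.bsup.{u,u} ξ (fun β _ => pr α β) := Ordinal.le_bsup _ β hβ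
        _ ≤ max (F α ξ) (Ordinal.bsup.{u,u} ξ (fun β _ => pr α β)) := le_max_right _ _
        _ ≤ Ordinal.bsup.{u,u} ξ (fun α _ =>
              max (F α ξ) (Ordinal.bsup.{u,u} ξ (fun β _ => pr α β))) := Ordinal.le_bsup _ α hα
        _ ≤ max ξ _ := le_max_right _ _
        _ < step ξ := ord_lt_add_one _
    set g : ℕ → Ordinal := fun n => Nat.rec (o + 1) (fun _ ih => step ih) n with hg_def
    have hg0 : g 0 = o + 1 := rfl
    have hgs : ∀ n, g (n + 1) = step (g n) := fun n => rfl
    have hglt : ∀ n, g n < omega1 := by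
      intro n
      induction n with
      | zero =>
        rw [hg0, Ordinal.add_one_eq_succ]
        exact omega1_isLimit.succ_lt ho
      | succ n ih => rw [hgs]; exact hstep_lt _ ih
    have hgmono : ∀ m n, m ≤ n → g m ≤ g n := by
      intro m n h
      induction h with
      | refl => exact le_refl _
      | step h ih => exact ih.trans (le_of_lt (by rw [hgs]; exact hstep_gt _))
    have hbddg : BddAbove (Set.range g) := omega1_bddAbove (by
      rintro x ⟨n, rfl⟩; exact hglt n)
    have hne_range : (Set.range g).Nonempty := ⟨g 0, 0, rfl⟩
    have hle : ∀ n, g n ≤ ⨆ n, g n := fun n => le_csSup hbddg ⟨n, rfl⟩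
    have hsuplt : (⨆ n, g n) < omega1 := iSup_nat_lt_omega1 g hglt
    have hlt_iSup : ∀ {x}, x < (⨆ n, g n) → ∃ n, x < g n := by
      intro x hx
      by_contra hc
      push_neg at hc
      exact absurd (csSup_le hne_range (by rintro y ⟨n, rfl⟩; exact hc n)) (not_le.mpr hx)
    refine ⟨⨆ n, g n, ⟨hsuplt, ?_, ?_⟩, lt_of_lt_of_le
      (lt_of_lt_of_le (ord_lt_add_one o) hg0.ge) (hle 0)⟩
    · -- diagonal membership in the clubs
      intro α hα
      obtain ⟨n, hn⟩ := hlt_iSup hα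
      have hαω : α < omega1 := hα.trans hsuplt
      set t : Set Ordinal := {x | ∃ m, n ≤ m ∧ x = F α (g m)} with ht_def
      have ht_sub : t ⊆ C α := by
        rintro x ⟨m, hm, rfl⟩
        exact (hF α (g m) hαω (hglt m)).1
      have ht_ne : t.Nonempty := ⟨F α (g n), n, le_refl n, rfl⟩
      have ht_bdd : BddAbove t :=
        omega1_bddAbove (fun x hx => (hC α hαω).1 (ht_sub hx))
      have hsup_le : sSup t ≤ ⨆ n, g n := by
        refine csSup_le ht_ne ?_
        rintro x ⟨m, hm, rfl⟩
        have hαm : α < g m := lt_of_lt_of_le hn (hgmono n m hm)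
        exact le_trans (le_of_lt (by rw [hgs m]; exact hstep_F (g m) α hαm)) (hle (m + 1))
      have hsup_ge : (⨆ n, g n) ≤ sSup t := by
        refine csSup_le hne_range ?_
        rintro x ⟨k, rfl⟩
        have h1 : g k ≤ g (max k n) := hgmono _ _ (le_max_left k n)
        have h2 : g (max k n) < F α (g (max k n)) :=
          (hF α (g (max k n)) hαω (hglt _)).2
        exact le_trans (h1.trans h2.le) (le_csSup ht_bdd ⟨max k n, le_max_right k n, rfl⟩)
      have heq : sSup t = ⨆ n, g n := le_antisymm hsup_le hsup_ge
      have := (hC α hαω).2.2 t ht_sub ht_ne (by rw [heq]; exact hsuplt)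
      rwa [heq] at this
    · -- closure under the pairing function
      intro α hα β hβ
      obtain ⟨n, hn⟩ := hlt_iSup hα
      obtain ⟨m, hm⟩ := hlt_iSup hβ
      have h1 : α < g (max n m) := lt_of_lt_of_le hn (hgmono _ _ (le_max_left n m))
      have h2 : β < g (max n m) := lt_of_lt_of_le hm (hgmono _ _ (le_max_right n m))
      have h3 : pr α β < g (max n m + 1) := by
        rw [hgs (max n m)]; exact hstep_pr (g (max n m)) α h1 β h2
      exact lt_of_lt_of_le h3 (hle (max n m + 1))
  · -- closedness
    intro s hs hne hlt
    have hbdd : BddAbove s := omega1_bddAbove (fun x hx => (hs hx).1)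
    refine ⟨hlt, ?_, ?_⟩
    · intro α hα
      obtain ⟨a, has, haa⟩ := (lt_csSup_iff hbdd hne).mp hα
      have hαω : α < omega1 := hα.trans hlt
      set s' : Set Ordinal := {ξ | ξ ∈ s ∧ α < ξ} with hs'_def
      have hs'sub : s' ⊆ C α := fun ξ hξ => (hs hξ.1).2.1 α hξ.2
      have hs'ne : s'.Nonempty := ⟨a, has, haa⟩
      have hs'bdd : BddAbove s' := omega1_bddAbove (fun x hx => (hs hx.1).1)
      have h1 : sSup s' = sSup s := by
        refine le_antisymm (csSup_le hs'ne (fun x hx => le_csSup hbdd hx.1))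
          (csSup_le hne (fun x hx => ?_))
        rcases lt_or_ge α x with h | h
        · exact le_csSup hs'bdd ⟨hx, h⟩
        · exact le_trans (h.trans haa.le) (le_csSup hs'bdd ⟨has, haa⟩)
      have := (hC α hαω).2.2 s' hs'sub hs'ne (by rw [h1]; exact hlt)
      rwa [h1] at this
    · intro α hα β hβ
      obtain ⟨a, has, haa⟩ := (lt_csSup_iff hbdd hne).mp hα
      obtain ⟨b, hbs, hbb⟩ := (lt_csSup_iff hbdd hne).mp hβ
      have hcs : max a b ∈ s := by
        rcases le_total a b with h | h
        · rwa [max_eq_right h]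
        · rwa [max_eq_left h]
      have := (hs hcs).2.2 α (lt_of_lt_of_le haa (le_max_left a b))
        β (lt_of_lt_of_le hbb (le_max_right a b))
      exact this.trans_le (le_csSup hbdd hcs)

/-- `NS_f` is a normal uniform ideal on `ω₁`: it contains all bounded subsets of
`ω₁`, is closed under subsets, and is closed under diagonal unions. -/
theorem NSf_normal_uniform_ideal (f : Ordinal → Set Col) (hf : Guesses f) :
    (∀ N ⊆ Set.Iio omega1, (∃ β < omega1, ∀ ξ ∈ N, ξ < β) → N ∈ NSf f) ∧
    (∀ N ∈ NSf f, ∀ M ⊆ N, M ∈ NSf f) ∧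
    (∀ S : Ordinal → Set Ordinal, (∀ α < omega1, S α ∈ NSf f) →
      {ξ | ξ < omega1 ∧ ∃ α < ξ, ξ ∈ S α} ∈ NSf f) := by
  refine ⟨?_, ?_, ?_⟩
  · -- bounded sets
    rintro N hN ⟨β, hβ, hbd⟩
    refine ⟨hN, fun hstat => ?_⟩
    obtain ⟨ξ, ⟨hξN, -⟩, hξC⟩ :=
      (hstat.2 (fun _ => Set.univ) (fun _ _ => colDense_univ)).2 _ (isClub_interval hβ)
    exact absurd (hbd ξ hξN) (not_lt.mpr hξC.1)
  · -- subsets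
    rintro N ⟨hN1, hN2⟩ M hM
    refine ⟨hM.trans hN1, fun hstat => ?_⟩
    obtain ⟨D, C₀, hDd, hCc, hmiss⟩ := not_fStationary_elim hN1 hN2
    obtain ⟨ξ, ⟨hξM, hξD⟩, hξC⟩ := (hstat.2 D hDd).2 C₀ hCc
    have : ξ ∈ ({α | α ∈ N ∧ ∀ β < α, (f α ∩ D β).Nonempty} ∩ C₀) :=
      ⟨⟨hM hξM, hξD⟩, hξC⟩
    rw [hmiss] at this
    exact Set.notMem_empty ξ this
  · -- diagonal unions
    intro S hS
    have hkey : ∀ α, ∃ (D : Ordinal → Set Col) (C : Set Ordinal), α < omega1 →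
        (∀ β < omega1, ColDense (D β)) ∧ IsClubOmega1 C ∧
        ({γ | γ ∈ S α ∧ ∀ β < γ, (f γ ∩ D β).Nonempty} ∩ C) = ∅ := by
      intro α
      by_cases h : α < omega1
      · obtain ⟨D, C, h1, h2, h3⟩ := not_fStationary_elim (hS α h).1 (hS α h).2
        exact ⟨D, C, fun _ => ⟨h1, h2, h3⟩⟩
      · exact ⟨fun _ => Set.univ, Set.univ, fun h' => absurd h' h⟩
    choose D C hkey using hkey
    -- a pairing function on ω₁
    obtain ⟨e⟩ := omega1_pairing
    set pr : Ordinal → Ordinal → Ordinal := fun α β =>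
      if h : α < omega1 ∧ β < omega1 then (e (⟨α, h.1⟩, ⟨β, h.2⟩) : Ordinal) else 0
      with hpr_def
    set E : Ordinal → Set Col := fun γ =>
      if h : γ < omega1 then D ((e.symm ⟨γ, h⟩).1 : Ordinal) ((e.symm ⟨γ, h⟩).2 : Ordinal)
      else Set.univ with hE_def
    have hpr_eq : ∀ {α β : Ordinal} (hα : α < omega1) (hβ : β < omega1),
        pr α β = (e (⟨α, hα⟩, ⟨β, hβ⟩) : Ordinal) := by
      intro α β hα hβ
      simp only [hpr_def]
      rw [dif_pos (⟨hα, hβ⟩ : α < omega1 ∧ β < omega1)]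
    have hpr_lt : ∀ α < omega1, ∀ β < omega1, pr α β < omega1 := by
      intro α hα β hβ
      rw [hpr_eq hα hβ]
      exact (e (⟨α, hα⟩, ⟨β, hβ⟩)).2
    have hE : ∀ {α β : Ordinal} (hα : α < omega1) (hβ : β < omega1),
        E (pr α β) = D α β := by
      intro α β hα hβ
      have hlt : pr α β < omega1 := hpr_lt α hα β hβ
      have hsub : (⟨pr α β, hlt⟩ : ↥(Set.Iio omega1)) = e (⟨α, hα⟩, ⟨β, hβ⟩) :=
        Subtype.ext (hpr_eq hα hβ)
      simp only [hE_def]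
      rw [dif_pos hlt, hsub, Equiv.symm_apply_apply]
    have hE_dense : ∀ γ < omega1, ColDense (E γ) := by
      intro γ hγ
      simp only [hE_def]
      rw [dif_pos hγ]
      exact (hkey _ (e.symm ⟨γ, hγ⟩).1.2).1 _ (e.symm ⟨γ, hγ⟩).2.2
    have hclub : IsClubOmega1 {ξ | ξ < omega1 ∧ (∀ α < ξ, ξ ∈ C α) ∧
        ∀ α < ξ, ∀ β < ξ, pr α β < ξ} :=
      isClub_diag C (fun α hα => (hkey α hα).2.1) pr hpr_lt
    refine ⟨fun ξ hξ => hξ.1, fun hstat => ?_⟩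
    obtain ⟨ξ, ⟨hξT, hξE⟩, hξC⟩ := (hstat.2 E hE_dense).2 _ hclub
    obtain ⟨hξω, α, hαξ, hξS⟩ := hξT
    have hαω : α < omega1 := hαξ.trans hξω
    have hmem : ξ ∈ ({γ | γ ∈ S α ∧ ∀ β < γ, (f γ ∩ D α β).Nonempty} ∩ C α) := by
      refine ⟨⟨hξS, fun β hβ => ?_⟩, hξC.2.1 α hαξ⟩
      have h1 : pr α β < ξ := hξC.2.2 α hαξ β hβ
      have h2 := hξE (pr α β) h1
      rwa [hE hαω (hβ.trans hξω)] at h2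
    rw [(hkey α hαω).2.2] at hmem
    exact Set.notMem_empty ξ hmem
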